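/- For every finite-dimensional irreducible complex G-representation V with Hom_G(V, L) ≠ 0, the A^G-module Hom_G(V, L) is simple: it has no A^G-invariant subspace other than 0 and itself. (Abstract Frobenius decomposition, Theorem 2.2, part 1.) -/

import Mathlib

/-- Conjugation action of a group element on endomorphisms of `L`:
`g · T := ρ(g) ∘ T ∘ ρ(g)⁻¹`. -/
def conjEnd {G L : Type*} [Group G] [AddCommGroup L] [Module ℂ L]
    (ρ : Representation ℂ G L) (g : G) :
    Module.End ℂ L →ₗ[ℂ] Module.End ℂ L where
  toFun T := ρ g ∘ₗ T ∘ₗ ρ g⁻¹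
  map_add' T S := by ext v; simp
  map_smul' c T := by ext v; simp


section FrobeniusAux

open Module LinearMap Polynomial

variable {L : Type*} [AddCommGroup L] [Module ℂ L]

/-- Any nonzero endomorphism commuting with an irreducibly-acting algebra is bijective. -/
lemma comm_bijective (A : Subalgebra ℂ (Module.End ℂ L))
    (hAirr : ∀ p : Submodule ℂ L, (∀ T ∈ A, ∀ x ∈ p, T x ∈ p) → p = ⊥ ∨ p = ⊤)
    (f : Module.End ℂ L) (hf : ∀ a ∈ A, a * f = f * a) (hf0 : f ≠ 0) :
    Function.Bijective f := by
  constructor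
  · have hker : ∀ T ∈ A, ∀ x ∈ LinearMap.ker f, T x ∈ LinearMap.ker f := by
      intro T hT x hx
      have : f (T x) = T (f x) := by
        have := hf T hT
        exact congrFun (congrArg DFunLike.coe this.symm) x
      simp only [LinearMap.mem_ker] at hx ⊢
      rw [this, hx, map_zero]
    rcases hAirr _ hker with h | h
    · exact LinearMap.ker_eq_bot.mp h
    · exact absurd (LinearMap.ker_eq_top.mp h) hf0
  · have hran : ∀ T ∈ A, ∀ x ∈ LinearMap.range f, T x ∈ LinearMap.range f := by
      intro T hT x hx
      obtain ⟨y, rfl⟩ := hx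
      refine ⟨T y, ?_⟩
      have h2 := congrFun (congrArg DFunLike.coe (hf T hT)) y
      simpa [Module.End.mul_apply] using h2.symm
    rcases hAirr _ hran with h | h
    · exfalso
      apply hf0
      ext x
      have : f x ∈ LinearMap.range f := ⟨x, rfl⟩
      rw [h] at this
      simpa using this
    · exact LinearMap.range_eq_top.mp h

lemma aeval_prod_injective (f : Module.End ℂ L)
    (hbij : ∀ c : ℂ, Function.Bijective (f - c • (1 : Module.End ℂ L)))
    (m : Multiset ℂ) :
    Function.Injective (Polynomial.aeval f ((m.map fun a => X - C a).prod)) := by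
  induction m using Multiset.induction_on with
  | empty => simpa [Module.End.coe_one] using Function.injective_id
  | cons a t ih =>
    rw [Multiset.map_cons, Multiset.prod_cons, map_mul]
    intro x y hxy
    simp only [Module.End.mul_apply] at hxy
    have h1 : (Polynomial.aeval f) (X - C a) = f - a • 1 := by
      simp [Algebra.algebraMap_eq_smul_one]
    rw [h1] at hxy
    exact ih ((hbij a).injective hxy)

lemma aeval_injective_of_ne_zero (f : Module.End ℂ L)
    (hbij : ∀ c : ℂ, Function.Bijective (f - c • (1 : Module.End ℂ L)))
    (p : ℂ[X]) (hp : p ≠ 0) : Function.Injective (Polynomial.aeval f p) := by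
  have hsplit : p.Splits := IsAlgClosed.splits p
  have hev := Polynomial.Splits.eq_prod_roots hsplit
  rw [hev, map_mul]
  intro x y hxy
  simp only [Module.End.mul_apply] at hxy
  have hprodinj := aeval_prod_injective f hbij p.roots
  have hscal : Function.Injective ((Polynomial.aeval f) (C p.leadingCoeff)) := by
    have hlc : p.leadingCoeff ≠ 0 := Polynomial.leadingCoeff_ne_zero.mpr hp
    simp only [Polynomial.aeval_C, Algebra.algebraMap_eq_smul_one]
    intro a b hab
    simp only [LinearMap.smul_apply, Module.End.one_apply] at hab
    exact smul_right_injective L hlc hab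
  exact hprodinj (hscal hxy)

/-- Dixmier's lemma: on a space of countable dimension, an endomorphism commuting
with an irreducibly acting algebra is a scalar. -/
lemma commutant_scalar (hcount : ∃ s : Set L, s.Countable ∧ Submodule.span ℂ s = ⊤)
    (hL : ∃ v : L, v ≠ 0)
    (A : Subalgebra ℂ (Module.End ℂ L))
    (hAirr : ∀ p : Submodule ℂ L, (∀ T ∈ A, ∀ x ∈ p, T x ∈ p) → p = ⊥ ∨ p = ⊤)
    (f : Module.End ℂ L) (hf : ∀ a ∈ A, a * f = f * a) :
    ∃ c : ℂ, f = c • 1 := by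
  by_contra hc
  push_neg at hc
  obtain ⟨v, hv⟩ := hL
  have hbij : ∀ c : ℂ, Function.Bijective (f - c • (1 : Module.End ℂ L)) := by
    intro c
    apply comm_bijective A hAirr
    · intro a ha
      rw [mul_sub, sub_mul, hf a ha]
      congr 1
      ext x
      simp
    · exact sub_ne_zero.mpr (hc c)
  -- the resolvent family applied to v
  set u : ℂ → L := fun c => Function.surjInv (hbij c).surjective v with hu
  have hue : ∀ c, (f - c • (1 : Module.End ℂ L)) (u c) = v := fun c => Function.surjInv_eq (hbij c).surjective v
  have hind : LinearIndependent ℂ u := by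
    rw [linearIndependent_iff']
    intro s g hsum i hi
    by_contra hgi
    set p : ℂ[X] := ∑ i' ∈ s, C (g i') * ∏ j ∈ s.erase i', (X - C j) with hp
    have hpev : Polynomial.aeval f p v = 0 := by
      have hterm : ∀ i' ∈ s, (Polynomial.aeval f (C (g i') * ∏ j ∈ s.erase i', (X - C j))) v
          = g i' • (Polynomial.aeval f (∏ j ∈ s, (X - C j))) (u i') := by
        intro i' hi'
        have h1 : (∏ j ∈ s.erase i', (X - C j)) * (X - C i') = ∏ j ∈ s, (X - C j) :=
          Finset.prod_erase_mul s _ hi'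
        have h2 : (Polynomial.aeval f (∏ j ∈ s.erase i', (X - C j))) v
            = (Polynomial.aeval f (∏ j ∈ s, (X - C j))) (u i') := by
          rw [← h1, map_mul, Module.End.mul_apply]
          congr 1
          have : (Polynomial.aeval f) (X - C i') = f - i' • 1 := by
            simp [Algebra.algebraMap_eq_smul_one]
          rw [this]
          rw [hue]
        rw [map_mul, Polynomial.aeval_C, Algebra.algebraMap_eq_smul_one, Module.End.mul_apply,
          LinearMap.smul_apply, Module.End.one_apply, ← h2]
      rw [hp, map_sum, LinearMap.sum_apply, Finset.sum_congr rfl hterm]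
      have hcomm : ∑ i' ∈ s, g i' • (Polynomial.aeval f (∏ j ∈ s, (X - C j))) (u i')
          = (Polynomial.aeval f (∏ j ∈ s, (X - C j))) (∑ i' ∈ s, g i' • u i') := by
        rw [map_sum]
        exact Finset.sum_congr rfl fun _ _ => (map_smul _ _ _).symm
      rw [hcomm, hsum, map_zero]
    have hpe : p.eval i = g i * ∏ j ∈ s.erase i, (i - j) := by
      rw [hp, Polynomial.eval_finset_sum]
      rw [Finset.sum_eq_single i]
      · simp [Polynomial.eval_prod]
      · intro i' hi' hne
        have hz : Polynomial.eval i (∏ j ∈ s.erase i', (X - C j)) = 0 := by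
          rw [Polynomial.eval_prod]
          apply Finset.prod_eq_zero (Finset.mem_erase.mpr ⟨Ne.symm hne, hi⟩)
          simp
        simp [hz]
      · intro h; exact absurd hi h
    have hpne : p ≠ 0 := by
      intro h
      rw [h, Polynomial.eval_zero] at hpe
      have hprod : (∏ j ∈ s.erase i, (i - j)) ≠ 0 := by
        rw [Finset.prod_ne_zero_iff]
        intro j hj
        exact sub_ne_zero.mpr (Ne.symm (Finset.mem_erase.mp hj).1)
      exact hgi (by
        rcases mul_eq_zero.mp hpe.symm with h' | h'
        · exact h'
        · exact absurd h' hprod)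
    have hinj := aeval_injective_of_ne_zero f hbij p hpne
    apply hv
    have : (Polynomial.aeval f p) v = (Polynomial.aeval f p) 0 := by rw [map_zero, hpev]
    exact hinj this
  -- cardinality contradiction
  obtain ⟨s, hsc, hss⟩ := hcount
  have h2 : Module.rank ℂ L ≤ Cardinal.aleph0 := by
    have h3 : Module.rank ℂ L ≤ Cardinal.mk s := by
      rw [← rank_top ℂ L, ← hss]
      exact rank_span_le s
    haveI := hsc.to_subtype
    exact h3.trans Cardinal.mk_le_aleph0
  have h1 := hind.cardinal_lift_le_rank
  have h4 := h1.trans (Cardinal.lift_le.mpr h2)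
  rw [Cardinal.lift_aleph0, Cardinal.lift_le_aleph0] at h4
  rw [Cardinal.mk_complex] at h4
  exact absurd h4 (not_le.mpr Cardinal.aleph0_lt_continuum)

/-- Jacobson density for an irreducible algebra with scalar commutant. -/
lemma jacobson_density_aux (hcount : ∃ s : Set L, s.Countable ∧ Submodule.span ℂ s = ⊤)
    (A : Subalgebra ℂ (Module.End ℂ L))
    (hAirr : ∀ p : Submodule ℂ L, (∀ T ∈ A, ∀ x ∈ p, T x ∈ p) → p = ⊥ ∨ p = ⊤) :
    ∀ (n : ℕ) (x y : Fin n → L), LinearIndependent ℂ x →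
      ∃ a ∈ A, ∀ i, a (x i) = y i := by
  intro n
  induction n with
  | zero => exact fun x y _ => ⟨1, A.one_mem, fun i => i.elim0⟩
  | succ n IH =>
    intro x y hx
    have hx' : LinearIndependent ℂ (fun i : Fin n => x i.castSucc) :=
      hx.comp Fin.castSucc (Fin.castSucc_injective n)
    have hsnoc : (Fin.snoc (fun i : Fin n => x i.castSucc) (x (Fin.last n)) : Fin (n+1) → L) = x := by
      funext j
      refine Fin.lastCases ?_ ?_ j
      · simp
      · intro i; simp
    by_cases hN : ∀ a ∈ A, (∀ j : Fin n, a (x j.castSucc) = 0) → a (x (Fin.last n)) = 0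
    · -- impossible: it forces x (last n) into the span of the others
      exfalso
      have hsel : ∀ (i : Fin n) (z : L), ∃ a, a ∈ A ∧
          ∀ j : Fin n, a (x j.castSucc) = if j = i then z else 0 := by
        intro i z
        obtain ⟨a, ha, he⟩ := IH (fun j => x j.castSucc) (fun j => if j = i then z else 0) hx'
        exact ⟨a, ha, he⟩
      choose sel hselA hselE using hsel
      have hL : ∃ v : L, v ≠ 0 := ⟨x (Fin.last n), hx.ne_zero _⟩
      -- each `sel i · (x last)` is an endomorphism commuting with A, hence a scalar
      have hkey : ∀ b ∈ A, (∀ j : Fin n, b (x j.castSucc) = 0) → b (x (Fin.last n)) = 0 := hN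
      have hFlin : ∀ i : Fin n, ∃ c : ℂ, ∀ z : L, sel i z (x (Fin.last n)) = c • z := by
        intro i
        have hwd : ∀ a b : Module.End ℂ L, a ∈ A → b ∈ A →
            (∀ j : Fin n, a (x j.castSucc) = b (x j.castSucc)) →
            a (x (Fin.last n)) = b (x (Fin.last n)) := by
          intro a b ha hb hab
          have : (a - b) (x (Fin.last n)) = 0 := by
            apply hkey _ (A.sub_mem ha hb)
            intro j
            simp [hab j]
          simpa [sub_eq_zero] using this
        set F : Module.End ℂ L :=
          { toFun := fun z => sel i z (x (Fin.last n))
            map_add' := by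
              intro z w
              have := hwd (sel i (z + w)) (sel i z + sel i w)
                (hselA i (z+w)) (A.add_mem (hselA i z) (hselA i w))
                (by intro j; simp [hselE, ite_add_ite])
              simpa using this
            map_smul' := by
              intro c z
              have := hwd (sel i (c • z)) (c • sel i z)
                (hselA i (c • z)) (A.smul_mem (hselA i z) c)
                (by intro j; simp [hselE, smul_ite])
              simpa using this } with hF
        have hcomm : ∀ a ∈ A, a * F = F * a := by
          intro a ha
          ext z
          have := hwd (a * sel i z) (sel i (a z))
            (A.mul_mem ha (hselA i z)) (hselA i (a z))
            (by intro j
                simp only [Module.End.mul_apply, hselE]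
                split <;> simp)
          simpa [hF, Module.End.mul_apply] using this
        obtain ⟨c, hc⟩ := commutant_scalar hcount hL A hAirr F hcomm
        refine ⟨c, fun z => ?_⟩
        have := congrFun (congrArg DFunLike.coe hc) z
        simpa [hF] using this
      choose c hc using hFlin
      set b : Module.End ℂ L := ∑ i : Fin n, sel i (x i.castSucc) with hb
      have hbA : b ∈ A := A.sum_mem (fun i _ => hselA i _)
      have hb1 : ∀ j : Fin n, b (x j.castSucc) = x j.castSucc := by
        intro j
        rw [hb, LinearMap.sum_apply]
        rw [Finset.sum_congr rfl (fun i _ => hselE i (x i.castSucc) j)]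
        simp
      have hblast : b (x (Fin.last n)) = x (Fin.last n) := by
        have h0 : (b - 1) (x (Fin.last n)) = 0 := by
          apply hkey _ (A.sub_mem hbA A.one_mem)
          intro j
          simp [hb1 j]
        simpa [sub_eq_zero] using h0
      have hbval : b (x (Fin.last n)) = ∑ i : Fin n, c i • x i.castSucc := by
        rw [hb, LinearMap.sum_apply]
        exact Finset.sum_congr rfl (fun i _ => hc i (x i.castSucc))
      have hmem : x (Fin.last n) ∈ Submodule.span ℂ (Set.range (fun i : Fin n => x i.castSucc)) := by
        rw [← hblast, hbval]
        exact Submodule.sum_mem _ (fun i _ =>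
          Submodule.smul_mem _ _ (Submodule.subset_span ⟨i, rfl⟩))
      have := linearIndependent_fin_snoc.mp (by rwa [hsnoc])
      exact this.2 hmem
    · push_neg at hN
      obtain ⟨a₀, ha₀A, ha₀z, ha₀ne⟩ := hN
      set M : Submodule ℂ L :=
        { carrier := {z | ∃ a : Module.End ℂ L,
            (a ∈ A ∧ ∀ j : Fin n, a (x j.castSucc) = 0) ∧ a (x (Fin.last n)) = z}
          add_mem' := by
            rintro z w ⟨a, ⟨haA, haz⟩, rfl⟩ ⟨b, ⟨hbA, hbz⟩, rfl⟩
            exact ⟨a + b, ⟨A.add_mem haA hbA, fun j => by simp [haz j, hbz j]⟩, by simp⟩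
          zero_mem' := ⟨0, ⟨A.zero_mem, fun j => rfl⟩, rfl⟩
          smul_mem' := by
            rintro t z ⟨a, ⟨haA, haz⟩, rfl⟩
            exact ⟨t • a, ⟨A.smul_mem haA t, fun j => by simp [haz j]⟩, by simp⟩ } with hM
      have hMtop : M = ⊤ := by
        have hinv : ∀ T ∈ A, ∀ z ∈ M, T z ∈ M := by
          rintro T hT z ⟨a, ⟨haA, haz⟩, rfl⟩
          exact ⟨T * a, ⟨A.mul_mem hT haA, fun j => by simp [Module.End.mul_apply, haz j]⟩, rfl⟩
        rcases hAirr M hinv with h | h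
        · exfalso
          have : a₀ (x (Fin.last n)) ∈ M := ⟨a₀, ⟨ha₀A, ha₀z⟩, rfl⟩
          rw [h] at this
          exact ha₀ne (by simpa using this)
        · exact h
      obtain ⟨bb, hbbA, hbbe⟩ := IH (fun j => x j.castSucc) (fun j => y j.castSucc) hx'
      have : y (Fin.last n) - bb (x (Fin.last n)) ∈ M := by rw [hMtop]; trivial
      obtain ⟨a, ⟨haA, haz⟩, hae⟩ := this
      refine ⟨a + bb, A.add_mem haA hbbA, ?_⟩
      intro i
      refine Fin.lastCases ?_ ?_ i
      · simp only [LinearMap.add_apply, hae]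
        abel
      · intro j
        simp [haz j, hbbe j]

end FrobeniusAux

/-- **Abstract Frobenius decomposition, Theorem 2.2, part 1.**
Under the standing hypotheses on `G`, `L` and `A`, for every finite-dimensional
irreducible complex `G`-representation `(π, V)` with `Hom_G(V, L) ≠ 0`, the
`A^G`-module `Hom_G(V, L)` is simple: any `A^G`-invariant subspace `W` of
`Hom_G(V, L)` is either `0` or all of `Hom_G(V, L)`. -/
theorem multiplicity_space_simple
    {G L : Type*} [Group G] [AddCommGroup L] [Module ℂ L]
    (ρ : Representation ℂ G L)
    -- `L` has countable dimension
    (hcount : ∃ s : Set L, s.Countable ∧ Submodule.span ℂ s = ⊤)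
    -- the `G`-action on `L` is locally finite
    (hlocfin : ∀ v : L, ∃ Y : Submodule ℂ L,
      (∀ g : G, ∀ y ∈ Y, ρ g y ∈ Y) ∧ FiniteDimensional ℂ Y ∧ v ∈ Y)
    -- the `G`-action on `L` is completely reducible
    (hcompred : ∀ p : Submodule ℂ L, (∀ g : G, ∀ y ∈ p, ρ g y ∈ p) →
      ∃ q : Submodule ℂ L, (∀ g : G, ∀ y ∈ q, ρ g y ∈ q) ∧ IsCompl p q)
    (A : Subalgebra ℂ (Module.End ℂ L))
    -- `A` acts irreducibly on `L`
    (hAirr : ∀ p : Submodule ℂ L, (∀ T ∈ A, ∀ x ∈ p, T x ∈ p) → p = ⊥ ∨ p = ⊤)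
    -- `A` is invariant under the conjugation `G`-action
    (hAG : ∀ g : G, ∀ T ∈ A, conjEnd ρ g T ∈ A)
    -- the `G`-action on `A` is locally finite
    (hAlocfin : ∀ T ∈ A, ∃ E : Submodule ℂ (Module.End ℂ L),
      E ≤ Subalgebra.toSubmodule A ∧ (∀ g : G, ∀ S ∈ E, conjEnd ρ g S ∈ E) ∧
      FiniteDimensional ℂ E ∧ T ∈ E)
    -- the `G`-action on `A` is completely reducible
    (hAcompred : ∀ p : Submodule ℂ (Module.End ℂ L),
      p ≤ Subalgebra.toSubmodule A → (∀ g : G, ∀ S ∈ p, conjEnd ρ g S ∈ p) →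
      ∃ q : Submodule ℂ (Module.End ℂ L), q ≤ Subalgebra.toSubmodule A ∧
        (∀ g : G, ∀ S ∈ q, conjEnd ρ g S ∈ q) ∧
        p ⊓ q = ⊥ ∧ p ⊔ q = Subalgebra.toSubmodule A)
    -- `(π, V)` is a finite-dimensional irreducible `G`-representation
    {V : Type*} [AddCommGroup V] [Module ℂ V] [FiniteDimensional ℂ V]
    (π : Representation ℂ G V)
    (hVirr : ∀ p : Submodule ℂ V, (∀ g : G, ∀ v ∈ p, π g v ∈ p) → p = ⊥ ∨ p = ⊤)
    -- `Hom_G(V, L) ≠ 0`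
    (hne : ∃ T : V →ₗ[ℂ] L, (∀ g : G, T ∘ₗ π g = ρ g ∘ₗ T) ∧ T ≠ 0)
    -- `W` is an `A^G`-invariant subspace of `Hom_G(V, L)`
    (W : Submodule ℂ (V →ₗ[ℂ] L))
    (hWsub : ∀ T ∈ W, ∀ g : G, T ∘ₗ π g = ρ g ∘ₗ T)
    (hWinv : ∀ D ∈ A, (∀ g : G, conjEnd ρ g D = D) → ∀ T ∈ W, D ∘ₗ T ∈ W) :
    W = ⊥ ∨ ∀ S : V →ₗ[ℂ] L, (∀ g : G, S ∘ₗ π g = ρ g ∘ₗ S) → S ∈ W := by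
  by_cases hW : W = ⊥
  · exact Or.inl hW
  right
  intro S hS
  obtain ⟨T, hTW, hT0⟩ := Submodule.ne_bot_iff W |>.mp hW
  have hTeq : ∀ g : G, T ∘ₗ π g = ρ g ∘ₗ T := hWsub T hTW
  have hTeq' : ∀ (g : G) (v : V), T (π g v) = ρ g (T v) := by
    intro g v; exact congrFun (congrArg DFunLike.coe (hTeq g)) v
  have hSeq' : ∀ (g : G) (v : V), S (π g v) = ρ g (S v) := by
    intro g v; exact congrFun (congrArg DFunLike.coe (hS g)) v
  have hρρ : ∀ (g : G) (w : L), ρ g (ρ g⁻¹ w) = w := by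
    intro g w
    rw [← Module.End.mul_apply, ← map_mul, mul_inv_cancel, map_one, Module.End.one_apply]
  have hρρ' : ∀ (g : G) (w : L), ρ g⁻¹ (ρ g w) = w := by
    intro g w
    rw [← Module.End.mul_apply, ← map_mul, inv_mul_cancel, map_one, Module.End.one_apply]
  -- T is injective
  have hker : LinearMap.ker T = ⊥ := by
    have hinv : ∀ g : G, ∀ v ∈ LinearMap.ker T, π g v ∈ LinearMap.ker T := by
      intro g v hv
      simp only [LinearMap.mem_ker] at hv ⊢
      rw [hTeq' g v, hv, map_zero]
    rcases hVirr (LinearMap.ker T) hinv with h | h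
    · exact h
    · exact absurd (LinearMap.ker_eq_top.mp h) hT0
  -- find a ∈ A with a ∘ T = S by Jacobson density
  set b := Module.finBasis ℂ V with hb
  have hxind : LinearIndependent ℂ (fun i => T (b i)) := by
    have := b.linearIndependent.map' T hker
    exact this
  obtain ⟨a, haA, hae⟩ := jacobson_density_aux hcount A hAirr _ (fun i => T (b i))
    (fun i => S (b i)) hxind
  have haT : a ∘ₗ T = S := b.ext (fun i => hae i)
  -- averaging: replace a by a G-invariant element of A with the same action on T
  obtain ⟨E, hEA, hEG, hEfd, haE⟩ := hAlocfin a haA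
  set K : Submodule ℂ (Module.End ℂ L) := E ⊓ LinearMap.ker (LinearMap.lcomp ℂ L T) with hK
  have hKmem : ∀ c : Module.End ℂ L, c ∈ K ↔ c ∈ E ∧ c ∘ₗ T = 0 := by
    intro c
    rw [hK, Submodule.mem_inf, LinearMap.mem_ker]
    rfl
  have hKE : K ≤ E := inf_le_left
  have hKA : K ≤ Subalgebra.toSubmodule A := le_trans hKE hEA
  have hKG : ∀ g : G, ∀ c ∈ K, conjEnd ρ g c ∈ K := by
    intro g c hc
    rw [hKmem] at hc ⊢
    refine ⟨hEG g c hc.1, ?_⟩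
    ext v
    have h1 : c (T (π g⁻¹ v)) = 0 := by
      have := congrFun (congrArg DFunLike.coe hc.2) (π g⁻¹ v)
      simpa using this
    simp only [LinearMap.comp_apply, LinearMap.zero_apply, conjEnd]
    show ρ g (c (ρ g⁻¹ (T v))) = 0
    have h2 : ρ g⁻¹ (T v) = T (π g⁻¹ v) := by
      rw [hTeq' g⁻¹ v]
    rw [h2, h1, map_zero]
  obtain ⟨q, hqA, hqG, hKqbot, hKqsup⟩ := hAcompred K hKA hKG
  -- decompose E = K ⊔ (q ⊓ E) by modularity
  have hEdec : K ⊔ (q ⊓ E) = E := by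
    have h1 : K ⊔ q ⊓ E = (K ⊔ q) ⊓ E := (sup_inf_assoc_of_le q hKE).symm
    rw [h1, hKqsup, inf_eq_right.mpr hEA]
  have haKE : a ∈ K ⊔ (q ⊓ E) := by rw [hEdec]; exact haE
  obtain ⟨k, hk, e, he, hke⟩ := Submodule.mem_sup.mp haKE
  have heE : e ∈ E := (Submodule.mem_inf.mp he).2
  have heq : e ∈ q := (Submodule.mem_inf.mp he).1
  have heA : e ∈ A := hEA heE
  -- e ∘ T = S
  have heT : e ∘ₗ T = S := by
    have hkT : k ∘ₗ T = 0 := ((hKmem k).mp hk).2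
    have : (k + e) ∘ₗ T = S := by rw [hke]; exact haT
    rw [LinearMap.add_comp, hkT, zero_add] at this
    exact this
  -- e is G-invariant
  have heGinv : ∀ g : G, conjEnd ρ g e = e := by
    intro g
    have hdq : conjEnd ρ g e - e ∈ q := Submodule.sub_mem q (hqG g e heq) heq
    have hdK : conjEnd ρ g e - e ∈ K := by
      rw [hKmem]
      refine ⟨Submodule.sub_mem E (hEG g e heE) heE, ?_⟩
      ext v
      simp only [LinearMap.sub_comp, LinearMap.sub_apply, LinearMap.comp_apply,
        LinearMap.zero_apply, conjEnd]
      show ρ g (e (ρ g⁻¹ (T v))) - e (T v) = 0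
      have h2 : ρ g⁻¹ (T v) = T (π g⁻¹ v) := by rw [hTeq' g⁻¹ v]
      have h3 : e (T (π g⁻¹ v)) = S (π g⁻¹ v) :=
        congrFun (congrArg DFunLike.coe heT) (π g⁻¹ v)
      have h4 : e (T v) = S v := congrFun (congrArg DFunLike.coe heT) v
      rw [h2, h3, hSeq' g⁻¹ v, hρρ g (S v), h4, sub_self]
    have : conjEnd ρ g e - e ∈ K ⊓ q := Submodule.mem_inf.mpr ⟨hdK, hdq⟩
    rw [hKqbot] at this
    have := (Submodule.mem_bot ℂ).mp this
    rwa [sub_eq_zero] at this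
  have := hWinv e heA heGinv T hTW
  rwa [heT] at this
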